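/- Let X be a point of F_q^{n+1}, let i,j ∈ {1,…,n+1}, and let c be a maximal flag of type i with respect to X. Then the number of maximal flags of type j with respect to X that are opposite to c equals 0 if i+j < n+2, and equals (q−1+δ_{i+j,n+2})·q^{n(n−1)/2 + j − 2} if i+j ≥ n+2 (equality of rational numbers; δ denotes the Kronecker delta). -/

import Mathlib

def MaxFlagA (F : Type) [Field F] (n : ℕ) : Type :=
  {U : Fin (n + 2) → Submodule F (Fin (n + 1) → F) //
    Monotone U ∧ ∀ k : Fin (n + 2), Module.finrank F (U k) = (k : ℕ)}

noncomputable def flagMemA {F : Type} [Field F] {n : ℕ} (c : MaxFlagA F n) (k : ℕ) :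
    Submodule F (Fin (n + 1) → F) :=
  if h : k < n + 2 then c.1 ⟨k, h⟩ else ⊤

noncomputable def flagTypeA {F : Type} [Field F] {n : ℕ} (c : MaxFlagA F n)
    (X : Submodule F (Fin (n + 1) → F)) : ℕ :=
  sInf {k : ℕ | X ≤ flagMemA c k}

/-- Two maximal flags are opposite when `U_i ∩ V_(n+1-i) = 0` for all `i`
(for `i = 0` and `i = n+1` this holds automatically). -/
def OppA {F : Type} [Field F] {n : ℕ} (c d : MaxFlagA F n) : Prop :=
  ∀ i : Fin (n + 2), c.1 i ⊓ d.1 i.rev = ⊥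

namespace FlagAux

open Module Submodule

variable {F : Type} [Field F] {n : ℕ}

lemma finrank_total : Module.finrank F (Fin (n+1) → F) = n + 1 := by
  simp [Module.finrank_pi]

lemma flag_top (d : MaxFlagA F n) : d.1 ⟨n+1, by omega⟩ = ⊤ := by
  apply Submodule.eq_top_of_finrank_eq
  rw [d.2.2 ⟨n+1, by omega⟩, finrank_total]

lemma flagMemA_eq (d : MaxFlagA F n) {k : ℕ} (h : k ≤ n+1) :
    flagMemA d k = d.1 ⟨k, by omega⟩ := dif_pos (by omega)

lemma flagMemA_mono (d : MaxFlagA F n) : Monotone (flagMemA d) := by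
  intro a b hab
  unfold flagMemA
  split_ifs with h1 h2 h2
  · exact d.2.1 (Fin.mk_le_mk.mpr hab)
  · exact le_top
  · omega
  · exact le_rfl

lemma flagType_eq_iff (d : MaxFlagA F n) (X : Submodule F (Fin (n+1) → F)) {j : ℕ}
    (hj : 1 ≤ j) :
    flagTypeA d X = j ↔ (X ≤ flagMemA d j ∧ ¬ X ≤ flagMemA d (j-1)) := by
  have hne : {k : ℕ | X ≤ flagMemA d k}.Nonempty :=
    ⟨n+1, by simp only [Set.mem_setOf_eq, flagMemA_eq d le_rfl, flag_top]; exact le_top⟩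
  unfold flagTypeA
  constructor
  · intro h
    refine ⟨?_, ?_⟩
    · have := Nat.sInf_mem hne; rwa [h] at this
    · exact Nat.notMem_of_lt_sInf (show j - 1 < sInf {k : ℕ | X ≤ flagMemA d k} by omega)
  · rintro ⟨h1, h2⟩
    refine le_antisymm (Nat.sInf_le h1) ?_
    by_contra hlt
    push_neg at hlt
    have hmem := Nat.sInf_mem hne
    exact h2 (le_trans hmem (flagMemA_mono d (by omega)))


lemma flagMemA_finrank (d : MaxFlagA F n) {m : ℕ} (hm : m ≤ n+1) :
    Module.finrank F (flagMemA d m) = m := by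
  rw [flagMemA_eq d hm]
  exact d.2.2 ⟨m, by omega⟩

lemma exists_adapted_basis (c : MaxFlagA F n) (X : Submodule F (Fin (n+1) → F))
    (hX : Module.finrank F X = 1) {i : ℕ} (hi1 : 1 ≤ i) (hi2 : i ≤ n+1)
    (hc : flagTypeA c X = i) :
    ∃ e : Basis (Fin (n+1)) F (Fin (n+1) → F),
      (∀ m : ℕ, m ≤ n+1 →
        flagMemA c m = Submodule.span F (e '' {r : Fin (n+1) | (r:ℕ) < m})) ∧
      X = Submodule.span F {e ⟨i-1, by omega⟩} := by
  classical
  obtain ⟨hXi, hXi'⟩ := (flagType_eq_iff c X hi1).mp hc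
  obtain ⟨x, hxX, hxn⟩ := SetLike.not_le_iff_exists.mp hXi'
  have hlt : ∀ k : Fin (n+1), flagMemA c (k:ℕ) < flagMemA c ((k:ℕ)+1) := by
    intro k
    have hk : (k:ℕ) ≤ n := Nat.lt_succ_iff.mp k.isLt
    refine lt_of_le_of_ne (flagMemA_mono c (Nat.le_succ _)) fun h => ?_
    have h1 := flagMemA_finrank c (show (k:ℕ) ≤ n+1 by omega)
    have h2 := flagMemA_finrank c (show (k:ℕ)+1 ≤ n+1 by omega)
    rw [h] at h1
    omega
  choose pick hpick1 hpick2 using fun k => SetLike.exists_of_lt (hlt k)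
  set i0 : Fin (n+1) := ⟨i-1, by omega⟩ with hi0
  set e0 : Fin (n+1) → (Fin (n+1) → F) := fun k => if k = i0 then x else pick k with he0
  have he0i : ∀ k : Fin (n+1), k = i0 → e0 k = x := by intro k hk; rw [he0]; simp [hk]
  have he0p : ∀ k : Fin (n+1), k ≠ i0 → e0 k = pick k := by intro k hk; rw [he0]; simp [hk]
  have key : ∀ m : ℕ, m ≤ n+1 →
      Submodule.span F (e0 '' {r : Fin (n+1) | (r:ℕ) < m}) = flagMemA c m := by
    intro m
    induction m with
    | zero =>
      intro _
      have hempty : {r : Fin (n+1) | (r:ℕ) < 0} = ∅ := by ext r; simp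
      rw [hempty]
      simp only [Set.image_empty, Submodule.span_empty]
      exact (Submodule.finrank_eq_zero.mp (flagMemA_finrank c (by omega))).symm
    | succ m ih =>
      intro hm
      have hmn : m ≤ n + 1 := Nat.le_of_succ_le hm
      have hm' : m < n + 1 := hm
      set mf : Fin (n+1) := ⟨m, hm'⟩ with hmf
      have hset : {r : Fin (n+1) | (r:ℕ) < m+1} = insert mf {r : Fin (n+1) | (r:ℕ) < m} := by
        ext r; simp [hmf, Fin.ext_iff]; omega
      rw [hset, Set.image_insert_eq, Submodule.span_insert, ih hmn]
      have hmem : e0 mf ∈ flagMemA c (m+1) := by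
        by_cases h : mf = i0
        · have hmi : m = i - 1 := by
            have := congrArg Fin.val h; simpa [hmf, hi0] using this
          rw [he0i mf h]
          have hii : m + 1 = i := by omega
          rw [hii]
          exact hXi hxX
        · rw [he0p mf h]
          exact hpick1 mf
      have hnmem : e0 mf ∉ flagMemA c m := by
        by_cases h : mf = i0
        · have hmi : m = i - 1 := by
            have := congrArg Fin.val h; simpa [hmf, hi0] using this
          rw [he0i mf h, hmi]
          exact hxn
        · rw [he0p mf h]
          exact hpick2 mf
      have hle : Submodule.span F {e0 mf} ⊔ flagMemA c m ≤ flagMemA c (m+1) :=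
        sup_le ((Submodule.span_singleton_le_iff_mem _ _).mpr hmem)
          (flagMemA_mono c (Nat.le_succ _))
      have hlt2 : flagMemA c m < Submodule.span F {e0 mf} ⊔ flagMemA c m := by
        refine lt_of_le_of_ne le_sup_right fun h => ?_
        exact hnmem (h ▸ Submodule.mem_sup_left (Submodule.mem_span_singleton_self _))
      have hrk : Module.finrank F (flagMemA c (m+1))
          ≤ Module.finrank F ↥(Submodule.span F {e0 mf} ⊔ flagMemA c m) := by
        have h1 := Submodule.finrank_lt_finrank_of_lt hlt2
        rw [flagMemA_finrank c hmn] at h1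
        rw [flagMemA_finrank c hm]
        omega
      exact Submodule.eq_of_le_of_finrank_le hle hrk
  have htop : ⊤ ≤ Submodule.span F (Set.range e0) := by
    have hsetu : {r : Fin (n+1) | (r:ℕ) < n+1} = Set.univ := by ext r; simp [r.isLt]; omega
    rw [← Set.image_univ, ← hsetu, key (n+1) le_rfl, flagMemA_eq c le_rfl, flag_top]
  have hcard : Fintype.card (Fin (n+1)) = Module.finrank F (Fin (n+1) → F) := by
    simp [finrank_total]
  refine ⟨basisOfTopLeSpanOfCardEqFinrank e0 htop hcard, ?_, ?_⟩
  · intro m hm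
    rw [coe_basisOfTopLeSpanOfCardEqFinrank, key m hm]
  · rw [coe_basisOfTopLeSpanOfCardEqFinrank]
    rw [he0i _ rfl]
    have hx0 : x ≠ 0 := fun h => hxn (h ▸ (Submodule.zero_mem _))
    have hle : Submodule.span F {x} ≤ X := (Submodule.span_singleton_le_iff_mem _ _).mpr hxX
    exact (Submodule.eq_of_le_of_finrank_le hle
      (by rw [hX, finrank_span_singleton hx0])).symm


/-! ### Unipotent upper-triangular matrices -/

def Unip (b : Matrix (Fin (n+1)) (Fin (n+1)) F) : Prop :=
  (∀ k, b k k = 1) ∧ ∀ r k : Fin (n+1), k < r → b r k = 0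

lemma Unip.bt {b : Matrix (Fin (n+1)) (Fin (n+1)) F} (hb : Unip b) :
    b.BlockTriangular id := fun r k h => hb.2 r k h

lemma Unip.det_eq {b : Matrix (Fin (n+1)) (Fin (n+1)) F} (hb : Unip b) : b.det = 1 := by
  rw [Matrix.det_of_upperTriangular hb.bt]
  simp [hb.1]

lemma Unip.isUnit {b : Matrix (Fin (n+1)) (Fin (n+1)) F} (hb : Unip b) : IsUnit b.det := by
  rw [hb.det_eq]; exact isUnit_one

lemma Unip.inv {b : Matrix (Fin (n+1)) (Fin (n+1)) F} (hb : Unip b) : Unip b⁻¹ := by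
  haveI := b.invertibleOfIsUnitDet hb.isUnit
  have hbt : b⁻¹.BlockTriangular id :=
    Matrix.blockTriangular_inv_of_blockTriangular hb.bt
  refine ⟨?_, fun r k h => hbt h⟩
  intro k
  have h1 : (b * b⁻¹) k k = 1 := by
    rw [Matrix.mul_nonsing_inv _ hb.isUnit, Matrix.one_apply_eq]
  rw [Matrix.mul_apply, Finset.sum_eq_single k] at h1
  · rwa [hb.1, one_mul] at h1
  · intro r _ hr
    rcases lt_or_gt_of_ne hr with hlt | hgt
    · rw [hb.2 k r hlt, zero_mul]
    · rw [hbt (show id k < id r from hgt), mul_zero]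
  · intro hk; exact absurd (Finset.mem_univ k) hk

variable (e : Basis (Fin (n+1)) F (Fin (n+1) → F))

/-- The span of the basis vectors with index `≥ n+1-m`. -/
def Wspan (m : ℕ) : Submodule F (Fin (n+1) → F) :=
  Submodule.span F (e '' {r : Fin (n+1) | n+1 ≤ (r:ℕ) + m})

lemma Wspan_mono : Monotone (Wspan e) := fun a b hab =>
  Submodule.span_mono (Set.image_mono (fun r hr => by
    simp only [Set.mem_setOf_eq] at hr ⊢; omega))

lemma mem_Wspan_iff (m : ℕ) (v : Fin (n+1) → F) :
    v ∈ Wspan e m ↔ ∀ r : Fin (n+1), (r:ℕ) + m < n+1 → e.repr v r = 0 := by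
  rw [Wspan, Basis.mem_span_image]
  constructor
  · intro h r hr
    by_contra h0
    have hs : r ∈ (e.repr v).support := Finsupp.mem_support_iff.mpr h0
    have := h hs
    simp only [Set.mem_setOf_eq] at this
    omega
  · intro h r hr
    have hr' : e.repr v r ≠ 0 := by simpa using hr
    simp only [Set.mem_setOf_eq]
    by_contra h0
    exact hr' (h r (by omega))

lemma finrank_Wspan (m : ℕ) (hm : m ≤ n+1) : Module.finrank F ↥(Wspan e m) = m := by
  classical
  have hli : LinearIndependent F (fun r : {r : Fin (n+1) // n+1 ≤ (r:ℕ) + m} => e r) :=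
    e.linearIndependent.comp _ Subtype.val_injective
  have hsp : Wspan e m
      = Submodule.span F (Set.range (fun r : {r : Fin (n+1) // n+1 ≤ (r:ℕ) + m} => e ↑r)) := by
    rw [Wspan]
    congr 1
    rw [show (fun r : {r : Fin (n+1) // n+1 ≤ (r:ℕ) + m} => e ↑r) = e ∘ Subtype.val from rfl,
      Set.range_comp, Subtype.range_coe_subtype]
  rw [hsp, finrank_span_eq_card hli]
  rcases Nat.eq_zero_or_pos m with rfl | hpos
  · have hem : IsEmpty {r : Fin (n+1) // n+1 ≤ (r:ℕ) + 0} :=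
      ⟨fun ⟨r, hr⟩ => by have := r.isLt; omega⟩
    exact Fintype.card_eq_zero_iff.mpr hem
  · rw [Fintype.card_subtype]
    have hfe : Finset.filter (fun r : Fin (n+1) => n+1 ≤ (r:ℕ) + m) Finset.univ
        = Finset.Ici (⟨n+1-m, by omega⟩ : Fin (n+1)) := by
      ext r
      simp only [Finset.mem_filter, Finset.mem_univ, true_and, Finset.mem_Ici, Fin.le_def]
      omega
    rw [hfe, Fin.card_Ici]
    show n + 1 - (n + 1 - m) = m
    omega


lemma toLin_basis_mem_Wspan (M : Matrix (Fin (n+1)) (Fin (n+1)) F) (k : Fin (n+1)) (m : ℕ) :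
    Matrix.toLin e e M (e k) ∈ Wspan e m ↔
      ∀ r : Fin (n+1), (r:ℕ) + m < n+1 → M r k = 0 := by
  rw [Matrix.toLin_self, mem_Wspan_iff]
  have h0 : ⇑(e.repr (∑ j, M j k • e j)) = fun j => M j k := e.repr_sum_self _
  simp only [h0]

noncomputable def unipEquiv {b : Matrix (Fin (n+1)) (Fin (n+1)) F} (hb : Unip b) :
    (Fin (n+1) → F) ≃ₗ[F] (Fin (n+1) → F) :=
  LinearEquiv.ofLinear (Matrix.toLin e e b) (Matrix.toLin e e b⁻¹)
    (by rw [← Matrix.toLin_mul, Matrix.mul_nonsing_inv _ hb.isUnit, Matrix.toLin_one])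
    (by rw [← Matrix.toLin_mul, Matrix.nonsing_inv_mul _ hb.isUnit, Matrix.toLin_one])

lemma toLin_inv_cancel {b : Matrix (Fin (n+1)) (Fin (n+1)) F} (hb : Unip b)
    (v : Fin (n+1) → F) : Matrix.toLin e e b⁻¹ (Matrix.toLin e e b v) = v := by
  rw [← Matrix.toLin_mul_apply, Matrix.nonsing_inv_mul _ hb.isUnit, Matrix.toLin_one,
    LinearMap.id_apply]

lemma toLin_cancel_inv {b : Matrix (Fin (n+1)) (Fin (n+1)) F} (hb : Unip b)
    (v : Fin (n+1) → F) : Matrix.toLin e e b (Matrix.toLin e e b⁻¹ v) = v := by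
  rw [← Matrix.toLin_mul_apply, Matrix.mul_nonsing_inv _ hb.isUnit, Matrix.toLin_one,
    LinearMap.id_apply]

lemma toLin_injective {b : Matrix (Fin (n+1)) (Fin (n+1)) F} (hb : Unip b) :
    Function.Injective (Matrix.toLin e e b) := fun x y hxy => by
  have := congrArg (Matrix.toLin e e b⁻¹) hxy
  rwa [toLin_inv_cancel e hb, toLin_inv_cancel e hb] at this

lemma comap_toLin_eq_map_inv {b : Matrix (Fin (n+1)) (Fin (n+1)) F} (hb : Unip b)
    (W : Submodule F (Fin (n+1) → F)) :
    W.comap (Matrix.toLin e e b) = W.map (Matrix.toLin e e b⁻¹) := by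
  ext v
  rw [Submodule.mem_comap, Submodule.mem_map]
  constructor
  · intro hv
    exact ⟨Matrix.toLin e e b v, hv, toLin_inv_cancel e hb v⟩
  · rintro ⟨w, hw, rfl⟩
    rwa [toLin_cancel_inv e hb w]

lemma finrank_comap_toLin {b : Matrix (Fin (n+1)) (Fin (n+1)) F} (hb : Unip b)
    (W : Submodule F (Fin (n+1) → F)) :
    Module.finrank F ↥(W.comap (Matrix.toLin e e b)) = Module.finrank F ↥W := by
  rw [comap_toLin_eq_map_inv e hb]
  exact (LinearEquiv.finrank_eq
    (Submodule.equivMapOfInjective _ (toLin_injective e hb.inv) W)).symm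

noncomputable def flagOf {b : Matrix (Fin (n+1)) (Fin (n+1)) F} (hb : Unip b) : MaxFlagA F n :=
  ⟨fun m => (Wspan e (m : ℕ)).comap (Matrix.toLin e e b),
   fun a b' hab => Submodule.comap_mono (Wspan_mono e (show ((a:ℕ)) ≤ (b':ℕ) from hab)),
   fun k => by
     show Module.finrank F ↥((Wspan e (k:ℕ)).comap (Matrix.toLin e e b)) = (k:ℕ)
     rw [finrank_comap_toLin e hb, finrank_Wspan e _ (by have := k.isLt; omega)]⟩

lemma mem_flagOf_iff {b : Matrix (Fin (n+1)) (Fin (n+1)) F} (hb : Unip b) (m : Fin (n+2))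
    (v : Fin (n+1) → F) :
    v ∈ (flagOf e hb).1 m ↔ Matrix.toLin e e b v ∈ Wspan e (m:ℕ) := Iff.rfl

lemma flagOf_type {b : Matrix (Fin (n+1)) (Fin (n+1)) F} (hb : Unip b)
    (X : Submodule F (Fin (n+1) → F)) {i0 : Fin (n+1)} (hXe : X = Submodule.span F {e i0})
    {j : ℕ} (hj1 : 1 ≤ j) (hj2 : j ≤ n+1) :
    flagTypeA (flagOf e hb) X = j ↔
      ((∀ r : Fin (n+1), (r:ℕ) + j < n+1 → b r i0 = 0) ∧ b ⟨n+1-j, by omega⟩ i0 ≠ 0) := by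
  rw [flagType_eq_iff _ X hj1]
  have hmem : ∀ m : ℕ, m ≤ n+1 →
      (X ≤ flagMemA (flagOf e hb) m ↔ ∀ r : Fin (n+1), (r:ℕ) + m < n+1 → b r i0 = 0) := by
    intro m hm
    rw [flagMemA_eq _ hm, hXe, Submodule.span_singleton_le_iff_mem,
      mem_flagOf_iff e hb ⟨m, by omega⟩ (e i0)]
    exact toLin_basis_mem_Wspan e b i0 m
  rw [hmem j hj2, hmem (j-1) (by omega)]
  constructor
  · rintro ⟨h1, h2⟩
    refine ⟨h1, fun h0 => h2 ?_⟩
    intro r hr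
    rcases Nat.lt_or_ge ((r:ℕ) + j) (n+1) with h | h
    · exact h1 r h
    · have hrv : r = ⟨n+1-j, by omega⟩ := Fin.ext (by show (r:ℕ) = n+1-j; omega)
      rwa [hrv]
  · rintro ⟨h1, h2⟩
    exact ⟨h1, fun h0 => h2 (h0 ⟨n+1-j, by omega⟩ (by show n+1-j + (j-1) < n+1; omega))⟩

lemma flagOf_opp (c : MaxFlagA F n)
    (hce : ∀ m : ℕ, m ≤ n+1 →
      flagMemA c m = Submodule.span F (e '' {r : Fin (n+1) | (r:ℕ) < m}))
    {b : Matrix (Fin (n+1)) (Fin (n+1)) F} (hb : Unip b) :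
    OppA c (flagOf e hb) := by
  intro m
  rw [eq_bot_iff]
  rintro v hv
  rw [Submodule.mem_inf] at hv
  obtain ⟨hv1, hv2⟩ := hv
  have hm1 : (m:ℕ) ≤ n+1 := by have := m.isLt; omega
  have hU : v ∈ Submodule.span F (e '' {r : Fin (n+1) | (r:ℕ) < (m:ℕ)}) := by
    rw [← hce (m:ℕ) hm1, flagMemA_eq c hm1]
    exact hv1
  have hT : Matrix.toLin e e b v ∈ Submodule.span F (e '' {r : Fin (n+1) | (r:ℕ) < (m:ℕ)}) := by
    have hmap : Submodule.map (Matrix.toLin e e b)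
        (Submodule.span F (e '' {r : Fin (n+1) | (r:ℕ) < (m:ℕ)}))
        ≤ Submodule.span F (e '' {r : Fin (n+1) | (r:ℕ) < (m:ℕ)}) := by
      rw [Submodule.map_span, Submodule.span_le]
      rintro y ⟨w, ⟨k, hk, rfl⟩, rfl⟩
      simp only [Set.mem_setOf_eq] at hk
      rw [SetLike.mem_coe, Matrix.toLin_self]
      refine Submodule.sum_mem _ fun r _ => ?_
      by_cases hr : (r:ℕ) < (m:ℕ)
      · exact Submodule.smul_mem _ _ (Submodule.subset_span ⟨r, hr, rfl⟩)
      · rw [hb.2 r k (show k < r from by rw [Fin.lt_def]; omega), zero_smul]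
        exact Submodule.zero_mem _
    exact hmap ⟨v, hU, rfl⟩
  have hW : Matrix.toLin e e b v ∈ Wspan e ((m.rev : ℕ)) := hv2
  have hdisj : Disjoint (Submodule.span F (e '' {r : Fin (n+1) | (r:ℕ) < (m:ℕ)}))
      (Submodule.span F (e '' {r : Fin (n+1) | n+1 ≤ (r:ℕ) + (m.rev : ℕ)})) := by
    refine e.linearIndependent.disjoint_span_image ?_
    rw [Set.disjoint_left]
    intro r hr1 hr2
    simp only [Set.mem_setOf_eq] at hr1 hr2
    rw [Fin.val_rev] at hr2
    omega
  have hz : Matrix.toLin e e b v = 0 :=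
    Submodule.disjoint_def.mp hdisj _ hT hW
  have hinj : v = 0 := by
    have := (unipEquiv e hb).injective (a₁ := v) (a₂ := 0)
    simp only [map_zero] at this
    exact this hz
  simp [hinj]


lemma flagOf_inj {b b' : Matrix (Fin (n+1)) (Fin (n+1)) F} (hb : Unip b) (hb' : Unip b')
    (h : flagOf e hb = flagOf e hb') : b = b' := by
  have hinv := hb.inv
  have key : ∀ k r : Fin (n+1), (r:ℕ) < (k:ℕ) → (b' * b⁻¹) r k = 0 := by
    intro k r hrk
    have hkm : (n+1-(k:ℕ)) < n+2 := by omega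
    have hu : Matrix.toLin e e b⁻¹ (e k) ∈ (flagOf e hb).1 ⟨n+1-(k:ℕ), hkm⟩ := by
      rw [mem_flagOf_iff, toLin_cancel_inv e hb, mem_Wspan_iff]
      intro r' hr'
      have hr'' : (r':ℕ) + (n+1-(k:ℕ)) < n+1 := hr'
      rw [Basis.repr_self]
      refine Finsupp.single_eq_of_ne fun hkr' => ?_
      subst hkr'
      omega
    rw [h, mem_flagOf_iff, ← Matrix.toLin_mul_apply, toLin_basis_mem_Wspan] at hu
    exact hu r (by show (r:ℕ) + (n+1-(k:ℕ)) < n+1; omega)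
  have key2 : b' * b⁻¹ = 1 := by
    ext r k
    rcases lt_trichotomy ((r:ℕ)) ((k:ℕ)) with h1 | h1 | h1
    · rw [key k r h1, Matrix.one_apply_ne (fun hh => by rw [hh] at h1; omega)]
    · have hek : r = k := Fin.ext h1
      subst hek
      rw [Matrix.one_apply_eq, Matrix.mul_apply, Finset.sum_eq_single r]
      · rw [hb'.1, hinv.1, one_mul]
      · intro s _ hs
        rcases lt_or_gt_of_ne hs with hlt | hgt
        · rw [hb'.2 r s hlt, zero_mul]
        · rw [hinv.2 s r hgt, mul_zero]
      · intro hr; exact absurd (Finset.mem_univ r) hr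
    · rw [Matrix.one_apply_ne (fun hh => by rw [hh] at h1; omega), Matrix.mul_apply]
      apply Finset.sum_eq_zero
      intro s _
      rcases Nat.lt_or_ge ((s:ℕ)) ((r:ℕ)) with h2 | h2
      · rw [hb'.2 r s (by rw [Fin.lt_def]; omega), zero_mul]
      · rw [hinv.2 s k (by rw [Fin.lt_def]; omega), mul_zero]
  symm
  calc b' = b' * (b⁻¹ * b) := by rw [Matrix.nonsing_inv_mul _ hb.isUnit, mul_one]
    _ = (b' * b⁻¹) * b := by rw [mul_assoc]
    _ = b := by rw [key2, one_mul]

lemma flagOf_surj (c d : MaxFlagA F n)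
    (hce : ∀ m : ℕ, m ≤ n+1 →
      flagMemA c m = Submodule.span F (e '' {r : Fin (n+1) | (r:ℕ) < m}))
    (hopp : OppA c d) :
    ∃ b : Matrix (Fin (n+1)) (Fin (n+1)) F, ∃ hb : Unip b, flagOf e hb = d := by
  classical
  have hpf : ∀ k : Fin (n+1), n+1-(k:ℕ) < n+2 := fun k => by omega
  have hpf2 : ∀ k : Fin (n+1), (k:ℕ) < n+2 := fun k => by omega
  have hsup : ∀ k : Fin (n+1), ∃ v, v ∈ d.1 ⟨n+1-(k:ℕ), hpf k⟩ ∧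
      e k - v ∈ flagMemA c (k:ℕ) := by
    intro k
    have hk1 : (k:ℕ) ≤ n+1 := by omega
    have hrev : (Fin.rev (⟨(k:ℕ), hpf2 k⟩ : Fin (n+2))) = ⟨n+1-(k:ℕ), hpf k⟩ := by
      apply Fin.ext
      rw [Fin.val_rev]
      show n + 2 - ((k:ℕ) + 1) = n + 1 - (k:ℕ)
      omega
    have hbot : flagMemA c (k:ℕ) ⊓ d.1 ⟨n+1-(k:ℕ), hpf k⟩ = ⊥ := by
      rw [flagMemA_eq c hk1, ← hrev]
      exact hopp ⟨(k:ℕ), hpf2 k⟩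
    have htop : flagMemA c (k:ℕ) ⊔ d.1 ⟨n+1-(k:ℕ), hpf k⟩ = ⊤ := by
      apply Submodule.eq_top_of_finrank_eq
      have hh := Submodule.finrank_sup_add_finrank_inf_eq
        (flagMemA c (k:ℕ)) (d.1 ⟨n+1-(k:ℕ), hpf k⟩)
      rw [hbot] at hh
      rw [finrank_bot, flagMemA_finrank c hk1, d.2.2 ⟨n+1-(k:ℕ), hpf k⟩] at hh
      rw [finrank_total]
      have hval : ((⟨n+1-(k:ℕ), hpf k⟩ : Fin (n+2)) : ℕ) = n+1-(k:ℕ) := rfl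
      rw [hval] at hh
      omega
    have hmem : e k ∈ flagMemA c (k:ℕ) ⊔ d.1 ⟨n+1-(k:ℕ), hpf k⟩ := by
      rw [htop]; exact Submodule.mem_top
    obtain ⟨u, hu, v, hv, huv⟩ := Submodule.mem_sup.mp hmem
    refine ⟨v, hv, ?_⟩
    have huv2 : e k - v = u := by rw [← huv]; abel
    rw [huv2]; exact hu
  choose f hf1 hf2 using hsup
  set a : Matrix (Fin (n+1)) (Fin (n+1)) F := fun r k => e.repr (f k) r with ha
  have hrepru : ∀ k r : Fin (n+1), (k:ℕ) ≤ (r:ℕ) → e.repr (e k - f k) r = 0 := by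
    intro k r hkr
    have h1 : e k - f k ∈ Submodule.span F (e '' {r : Fin (n+1) | (r:ℕ) < (k:ℕ)}) := by
      rw [← hce (k:ℕ) (by omega)]; exact hf2 k
    rw [Basis.mem_span_image] at h1
    by_contra h0
    have hs : r ∈ (e.repr (e k - f k)).support := Finsupp.mem_support_iff.mpr h0
    have := h1 hs
    simp only [Set.mem_setOf_eq] at this
    omega
  have hsub : ∀ k r : Fin (n+1), e.repr (f k) r
      = e.repr (e k) r - e.repr (e k - f k) r := by
    intro k r
    rw [map_sub, Finsupp.sub_apply]
    ring
  have hUnip : Unip a := by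
    constructor
    · intro k
      show e.repr (f k) k = 1
      rw [hsub, hrepru k k le_rfl, Basis.repr_self, Finsupp.single_eq_same]
      ring
    · intro r k hkr
      show e.repr (f k) r = 0
      rw [hsub, hrepru k r (le_of_lt hkr), Basis.repr_self,
        Finsupp.single_eq_of_ne (fun hh => by rw [hh] at hkr; exact lt_irrefl _ hkr)]
      ring
  have hTa : ∀ k, Matrix.toLin e e a (e k) = f k := by
    intro k
    rw [Matrix.toLin_self]
    exact e.sum_repr (f k)
  refine ⟨a⁻¹, hUnip.inv, ?_⟩
  apply Subtype.ext
  funext m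
  show (Wspan e ((m:ℕ))).comap (Matrix.toLin e e a⁻¹) = d.1 m
  have hinv2 : a⁻¹⁻¹ = a := Matrix.nonsing_inv_nonsing_inv _ hUnip.isUnit
  rw [comap_toLin_eq_map_inv e hUnip.inv, hinv2]
  have hm1 : (m:ℕ) ≤ n+1 := by have := m.isLt; omega
  have hle : (Wspan e (m:ℕ)).map (Matrix.toLin e e a) ≤ d.1 m := by
    rw [Wspan, Submodule.map_span, Submodule.span_le]
    rintro y ⟨w, ⟨k, hk, rfl⟩, rfl⟩
    simp only [Set.mem_setOf_eq] at hk
    rw [SetLike.mem_coe, hTa k]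
    refine d.2.1 (show (⟨n+1-(k:ℕ), hpf k⟩ : Fin (n+2)) ≤ m from ?_) (hf1 k)
    rw [Fin.le_def]
    show n+1-(k:ℕ) ≤ (m:ℕ)
    omega
  refine Submodule.eq_of_le_of_finrank_le hle ?_
  rw [d.2.2 m]
  have hfr : Module.finrank F ↥((Wspan e (m:ℕ)).map (Matrix.toLin e e a)) = (m:ℕ) := by
    rw [← (LinearEquiv.finrank_eq
      (Submodule.equivMapOfInjective _ (toLin_injective e hUnip) (Wspan e (m:ℕ)))),
      finrank_Wspan e _ hm1]
  rw [hfr]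


/-! ### Counting -/

lemma card_subeq [Fintype F] (y : F) : Nat.card {x : F // x = y} = 1 := by
  classical
  rw [Nat.card_eq_fintype_card, Fintype.card_subtype_eq]

lemma card_subtrue [Fintype F] : Nat.card {x : F // True} = Fintype.card F := by
  classical
  rw [Nat.card_eq_fintype_card,
    Fintype.card_congr (Equiv.subtypeUnivEquiv fun _ => trivial)]

lemma card_subne [Fintype F] : Nat.card {x : F // ¬ (x = 0)} = Fintype.card F - 1 := by
  classical
  rw [Nat.card_eq_fintype_card, Fintype.card_subtype_compl, Fintype.card_subtype_eq]

def Aset (i0 t0 : Fin (n+1)) (j : ℕ) (r k : Fin (n+1)) : Set F :=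
  {x | (r = k → x = 1) ∧ (k < r → x = 0) ∧ (k = i0 → (r:ℕ) + j < n+1 → x = 0)
    ∧ (k = i0 → r = t0 → x ≠ 0)}

def vm (q : ℕ) (i0 t0 : Fin (n+1)) (j : ℕ) (r k : Fin (n+1)) : ℕ :=
  if r = k then 1 else if k < r then 1 else if k = i0 then
    (if (r:ℕ) + j < n+1 then 1 else if r = t0 then q - 1 else q)
  else q

lemma card_Aset [Fintype F] {i0 t0 : Fin (n+1)} {j : ℕ} (hto : (t0:ℕ) + j = n+1)
    (hti : (t0:ℕ) ≤ (i0:ℕ)) (r k : Fin (n+1)) :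
    Nat.card (Aset (F := F) i0 t0 j r k) = vm (Fintype.card F) i0 t0 j r k := by
  classical
  unfold Aset vm
  rcases eq_or_ne r k with rfl | hrk
  · rw [if_pos rfl]
    rw [Nat.card_congr (Equiv.subtypeEquivRight (q := fun x : F => x = 1) ?_), card_subeq]
    intro x
    constructor
    · exact fun hx => hx.1 rfl
    · rintro rfl
      refine ⟨fun _ => rfl, fun h => absurd h (lt_irrefl r), fun hk h => ?_,
        fun _ _ => one_ne_zero⟩
      exfalso
      have hv : (r:ℕ) = (i0:ℕ) := congrArg Fin.val hk
      omega
  · rw [if_neg hrk]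
    by_cases hkr : k < r
    · rw [if_pos hkr]
      rw [Nat.card_congr (Equiv.subtypeEquivRight (q := fun x : F => x = 0) ?_), card_subeq]
      intro x
      constructor
      · exact fun hx => hx.2.1 hkr
      · rintro rfl
        refine ⟨fun h => absurd h hrk, fun _ => rfl, fun _ _ => rfl, fun hk0 hr0 => ?_⟩
        exfalso
        have hv1 : (k:ℕ) = (i0:ℕ) := congrArg Fin.val hk0
        have hv2 : (r:ℕ) = (t0:ℕ) := congrArg Fin.val hr0
        have hv3 : (k:ℕ) < (r:ℕ) := hkr
        omega
    · have hrklt : (r:ℕ) < (k:ℕ) := by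
        have h1 : ¬ (k:ℕ) < (r:ℕ) := fun h => hkr (Fin.lt_def.mpr h)
        have h2 : (r:ℕ) ≠ (k:ℕ) := fun h => hrk (Fin.ext h)
        omega
      rw [if_neg hkr]
      by_cases hki : k = i0
      · rw [if_pos hki]
        subst hki
        by_cases h1 : (r:ℕ) + j < n+1
        · rw [if_pos h1]
          rw [Nat.card_congr (Equiv.subtypeEquivRight (q := fun x : F => x = 0) ?_), card_subeq]
          intro x
          constructor
          · exact fun hx => hx.2.2.1 rfl h1
          · rintro rfl
            refine ⟨fun h => absurd h hrk, fun h => absurd h hkr, fun _ _ => rfl,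
              fun _ hr0 => ?_⟩
            exfalso
            have hv2 : (r:ℕ) = (t0:ℕ) := congrArg Fin.val hr0
            omega
        · rw [if_neg h1]
          by_cases h2 : r = t0
          · rw [if_pos h2]
            rw [Nat.card_congr (Equiv.subtypeEquivRight (q := fun x : F => ¬ (x = 0)) ?_),
              card_subne]
            intro x
            constructor
            · exact fun hx => hx.2.2.2 rfl h2
            · intro hx0
              exact ⟨fun h => absurd h hrk, fun h => absurd h hkr,
                fun _ hlt => absurd hlt h1, fun _ _ => hx0⟩
          · rw [if_neg h2]
            rw [Nat.card_congr (Equiv.subtypeEquivRight (q := fun _ : F => True) ?_), card_subtrue]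
            intro x
            constructor
            · exact fun _ => trivial
            · exact fun _ => ⟨fun h => absurd h hrk, fun h => absurd h hkr,
                fun _ hlt => absurd hlt h1, fun _ hr0 => absurd hr0 h2⟩
      · rw [if_neg hki]
        rw [Nat.card_congr (Equiv.subtypeEquivRight (q := fun _ : F => True) ?_), card_subtrue]
        intro x
        constructor
        · exact fun _ => trivial
        · exact fun _ => ⟨fun h => absurd h hrk, fun h => absurd h hkr,
            fun h => absurd h hki, fun h => absurd h hki⟩

lemma prod_vm (q : ℕ) {i0 t0 : Fin (n+1)} {j : ℕ} (hto : (t0:ℕ) + j = n+1)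
    (hti : (t0:ℕ) ≤ (i0:ℕ)) :
    ∏ r : Fin (n+1), ∏ k : Fin (n+1), vm q i0 t0 j r k
      = (if (t0:ℕ) = (i0:ℕ) then 1 else (q-1) * q^((i0:ℕ) - (t0:ℕ) - 1))
        * q^((n+1)*n/2 - (i0:ℕ)) := by
  classical
  rw [Finset.prod_comm]
  have hcol : ∀ k : Fin (n+1), k ≠ i0 → (∏ r : Fin (n+1), vm q i0 t0 j r k) = q^(k:ℕ) := by
    intro k hk
    have hre : ∀ r : Fin (n+1), vm q i0 t0 j r k = if (r:ℕ) < (k:ℕ) then q else 1 := by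
      intro r
      unfold vm
      rcases eq_or_ne r k with rfl | hrk
      · rw [if_pos rfl, if_neg (lt_irrefl _)]
      · rw [if_neg hrk]
        by_cases hkr : k < r
        · have hv : (k:ℕ) < (r:ℕ) := hkr
          rw [if_pos hkr, if_neg (by omega)]
        · have hrklt : (r:ℕ) < (k:ℕ) := by
            have h1 : ¬ (k:ℕ) < (r:ℕ) := fun h => hkr (Fin.lt_def.mpr h)
            have h2 : (r:ℕ) ≠ (k:ℕ) := fun h => hrk (Fin.ext h)
            omega
          rw [if_neg hkr, if_neg hk, if_pos hrklt]
    rw [Finset.prod_congr rfl fun r _ => hre r, ← Finset.prod_filter, Finset.prod_const]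
    congr 1
    have hfe : Finset.filter (fun r : Fin (n+1) => (r:ℕ) < (k:ℕ)) Finset.univ
        = Finset.Iio k := by
      ext r
      simp only [Finset.mem_filter, Finset.mem_univ, true_and, Finset.mem_Iio, Fin.lt_def]
    rw [hfe, Fin.card_Iio]
  have hcoli : (∏ r : Fin (n+1), vm q i0 t0 j r i0)
      = (if (t0:ℕ) = (i0:ℕ) then 1 else (q-1) * q^((i0:ℕ) - (t0:ℕ) - 1)) := by
    by_cases hd : (t0:ℕ) = (i0:ℕ)
    · rw [if_pos hd]
      apply Finset.prod_eq_one
      intro r _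
      unfold vm
      rcases eq_or_ne r i0 with rfl | hri
      · rw [if_pos rfl]
      · rw [if_neg hri]
        by_cases hir : i0 < r
        · rw [if_pos hir]
        · have hrlt : (r:ℕ) < (i0:ℕ) := by
            have h1 : ¬ (i0:ℕ) < (r:ℕ) := fun h => hir (Fin.lt_def.mpr h)
            have h2 : (r:ℕ) ≠ (i0:ℕ) := fun h => hri (Fin.ext h)
            omega
          rw [if_neg hir, if_pos rfl, if_pos (by omega)]
    · rw [if_neg hd]
      have hd' : (t0:ℕ) < (i0:ℕ) := lt_of_le_of_ne hti hd
      have hsplit : ∀ r : Fin (n+1), vm q i0 t0 j r i0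
          = (if r = t0 then q-1 else 1)
            * (if (t0:ℕ) < (r:ℕ) ∧ (r:ℕ) < (i0:ℕ) then q else 1) := by
        intro r
        unfold vm
        rcases eq_or_ne r i0 with rfl | hri
        · rw [if_pos rfl, if_neg (show r ≠ t0 from fun h => by
            have := congrArg Fin.val h; omega), if_neg (by omega), one_mul]
        · rw [if_neg hri]
          by_cases hir : i0 < r
          · have hv : (i0:ℕ) < (r:ℕ) := hir
            rw [if_pos hir, if_neg (show r ≠ t0 from fun h => by
              have := congrArg Fin.val h; omega), if_neg (by omega), one_mul]
          · have hrlt : (r:ℕ) < (i0:ℕ) := by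
              have h1 : ¬ (i0:ℕ) < (r:ℕ) := fun h => hir (Fin.lt_def.mpr h)
              have h2 : (r:ℕ) ≠ (i0:ℕ) := fun h => hri (Fin.ext h)
              omega
            rw [if_neg hir, if_pos rfl]
            by_cases h1 : (r:ℕ) + j < n+1
            · rw [if_pos h1, if_neg (show r ≠ t0 from fun h => by
                have := congrArg Fin.val h; omega), if_neg (by omega), one_mul]
            · rw [if_neg h1]
              by_cases h2 : r = t0
              · have hv2 : (r:ℕ) = (t0:ℕ) := congrArg Fin.val h2
                rw [if_pos h2, if_pos h2, if_neg (by omega), mul_one]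
              · have hv2 : (r:ℕ) ≠ (t0:ℕ) := fun h => h2 (Fin.ext h)
                rw [if_neg h2, if_neg h2, if_pos (by omega), one_mul]
      rw [Finset.prod_congr rfl fun r _ => hsplit r, Finset.prod_mul_distrib]
      congr 1
      · rw [Finset.prod_ite_eq' Finset.univ t0 (fun _ => q-1), if_pos (Finset.mem_univ t0)]
      · rw [← Finset.prod_filter, Finset.prod_const]
        congr 1
        have hfe : Finset.filter (fun r : Fin (n+1) => (t0:ℕ) < (r:ℕ) ∧ (r:ℕ) < (i0:ℕ))
            Finset.univ = Finset.Ioo t0 i0 := by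
          ext r
          simp only [Finset.mem_filter, Finset.mem_univ, true_and, Finset.mem_Ioo, Fin.lt_def]
        rw [hfe, Fin.card_Ioo]
  rw [← Finset.mul_prod_erase Finset.univ _ (Finset.mem_univ i0), hcoli]
  congr 1
  rw [Finset.prod_congr rfl (fun k hk => hcol k (Finset.ne_of_mem_erase hk)),
    Finset.prod_pow_eq_pow_sum]
  congr 1
  have h1 : (∑ k ∈ Finset.univ.erase i0, (k:ℕ)) + (i0:ℕ) = ∑ k : Fin (n+1), (k:ℕ) :=
    Finset.sum_erase_add _ _ (Finset.mem_univ i0)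
  have h2 : ∑ k : Fin (n+1), (k:ℕ) = (n+1)*n/2 := by
    rw [Fin.sum_univ_eq_sum_range (fun i => i) (n+1), Finset.sum_range_id,
      Nat.add_sub_cancel]
  omega

end FlagAux

open FlagAux in
/-- The number of maximal flags of type `j` w.r.t. `X` opposite to a given flag of type `i`
w.r.t. `X` is `0` if `i+j < n+2` and `(q-1+δ_{i+j,n+2})·q^(n(n-1)/2+j-2)` otherwise. -/
theorem card_opposite_type_j_flags (F : Type) [Field F] [Fintype F] (q : ℕ)
    (hq : Fintype.card F = q) (n : ℕ) (X : Submodule F (Fin (n + 1) → F))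
    (hX : Module.finrank F X = 1) (i j : ℕ) (hi1 : 1 ≤ i) (hi2 : i ≤ n + 1)
    (hj1 : 1 ≤ j) (hj2 : j ≤ n + 1) (c : MaxFlagA F n) (hc : flagTypeA c X = i) :
    (Nat.card {d : MaxFlagA F n // flagTypeA d X = j ∧ OppA c d} : ℚ) =
      if i + j < n + 2 then 0
      else ((q : ℚ) - 1 + (if i + j = n + 2 then 1 else 0)) *
        (q : ℚ) ^ (((n * (n - 1) / 2 : ℕ) : ℤ) + (j : ℤ) - 2) := by
  classical
  subst hq
  by_cases hij : i + j < n + 2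
  · rw [if_pos hij]
    have hEmpty : IsEmpty {d : MaxFlagA F n // flagTypeA d X = j ∧ OppA c d} := by
      constructor
      rintro ⟨d, hdj, hopp⟩
      have h1 : X ≤ flagMemA c i := ((flagType_eq_iff c X hi1).mp hc).1
      have h2 : X ≤ flagMemA d j := ((flagType_eq_iff d X hj1).mp hdj).1
      rw [flagMemA_eq c hi2] at h1
      rw [flagMemA_eq d hj2] at h2
      have hi2' : i < n+2 := by omega
      have h3 : d.1 ⟨j, by omega⟩ ≤ d.1 (Fin.rev ⟨i, hi2'⟩) := by
        apply d.2.1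
        rw [Fin.le_def, Fin.val_rev]
        show j ≤ n + 2 - (i + 1)
        omega
      have h4 : X ≤ c.1 ⟨i, hi2'⟩ ⊓ d.1 (Fin.rev ⟨i, hi2'⟩) := le_inf h1 (le_trans h2 h3)
      rw [hopp ⟨i, hi2'⟩] at h4
      have h5 : X = ⊥ := le_bot_iff.mp h4
      rw [h5, finrank_bot] at hX
      omega
    rw [Nat.card_of_isEmpty, Nat.cast_zero]
  · push_neg at hij
    rw [if_neg (by omega)]
    obtain ⟨e, hce, hXe0⟩ := exists_adapted_basis c X hX hi1 hi2 hc
    have hpi : i - 1 < n + 1 := by omega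
    have hpt : n + 1 - j < n + 1 := by omega
    set i0 : Fin (n+1) := ⟨i-1, hpi⟩ with hi0def
    set t0 : Fin (n+1) := ⟨n+1-j, hpt⟩ with ht0def
    have hXe : X = Submodule.span F {e i0} := hXe0
    have hi0v : (i0:ℕ) = i - 1 := rfl
    have ht0v : (t0:ℕ) = n + 1 - j := rfl
    have hto : (t0:ℕ) + j = n+1 := by omega
    have hti : (t0:ℕ) ≤ (i0:ℕ) := by omega
    have hbij : Nat.card {d : MaxFlagA F n // flagTypeA d X = j ∧ OppA c d}
        = Nat.card {b : Matrix (Fin (n+1)) (Fin (n+1)) F //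
            Unip b ∧ (∀ r : Fin (n+1), (r:ℕ) + j < n+1 → b r i0 = 0) ∧ b t0 i0 ≠ 0} := by
      apply Nat.card_congr
      apply Equiv.symm
      refine Equiv.ofBijective (fun bb =>
        ⟨flagOf e bb.2.1,
         (flagOf_type e bb.2.1 X hXe hj1 hj2).mpr ⟨bb.2.2.1, bb.2.2.2⟩,
         flagOf_opp e c hce bb.2.1⟩) ⟨?_, ?_⟩
      · rintro bb bb' hbb
        exact Subtype.ext (flagOf_inj e bb.2.1 bb'.2.1 (congrArg Subtype.val hbb))
      · rintro ⟨d, hdj, hopp⟩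
        obtain ⟨b, hb, hfb⟩ := flagOf_surj e c d hce hopp
        have htype : flagTypeA (flagOf e hb) X = j := by rw [hfb]; exact hdj
        obtain ⟨hcol1, hcol2⟩ := (flagOf_type e hb X hXe hj1 hj2).mp htype
        exact ⟨⟨b, hb, hcol1, hcol2⟩, Subtype.ext hfb⟩
    have hAiff : ∀ b : Matrix (Fin (n+1)) (Fin (n+1)) F,
        (Unip b ∧ (∀ r : Fin (n+1), (r:ℕ) + j < n+1 → b r i0 = 0) ∧ b t0 i0 ≠ 0)
          ↔ ∀ r k : Fin (n+1), b r k ∈ Aset i0 t0 j r k := by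
      intro b
      constructor
      · rintro ⟨⟨h1, h2⟩, h3, h4⟩ r k
        refine ⟨fun h => ?_, fun h => h2 r k h, fun hk h => ?_, fun hk hr => ?_⟩
        · subst h; exact h1 r
        · subst hk; exact h3 r h
        · subst hk; subst hr; exact h4
      · intro h
        exact ⟨⟨fun k => (h k k).1 rfl, fun r k hkr => (h r k).2.1 hkr⟩,
          fun r hr => (h r i0).2.2.1 rfl hr, (h t0 i0).2.2.2 rfl rfl⟩
    have hstep3 : Nat.card {b : Matrix (Fin (n+1)) (Fin (n+1)) F //
            Unip b ∧ (∀ r : Fin (n+1), (r:ℕ) + j < n+1 → b r i0 = 0) ∧ b t0 i0 ≠ 0}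
        = ∏ r : Fin (n+1), ∏ k : Fin (n+1), Nat.card (Aset (F := F) i0 t0 j r k) := by
      calc Nat.card {b : Matrix (Fin (n+1)) (Fin (n+1)) F //
              Unip b ∧ (∀ r : Fin (n+1), (r:ℕ) + j < n+1 → b r i0 = 0) ∧ b t0 i0 ≠ 0}
          = Nat.card {b : Fin (n+1) → Fin (n+1) → F //
              ∀ r k : Fin (n+1), b r k ∈ Aset i0 t0 j r k} :=
            Nat.card_congr (Equiv.subtypeEquivRight hAiff)
        _ = Nat.card (∀ r : Fin (n+1),
              {row : Fin (n+1) → F // ∀ k, row k ∈ Aset i0 t0 j r k}) :=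
            Nat.card_congr (Equiv.subtypePiEquivPi
              (p := fun r (row : Fin (n+1) → F) => ∀ k, row k ∈ Aset i0 t0 j r k))
        _ = ∏ r : Fin (n+1),
              Nat.card {row : Fin (n+1) → F // ∀ k, row k ∈ Aset i0 t0 j r k} :=
            Nat.card_pi
        _ = ∏ r : Fin (n+1), Nat.card (∀ k : Fin (n+1), {x : F // x ∈ Aset i0 t0 j r k}) :=
            Finset.prod_congr rfl fun r _ => Nat.card_congr (Equiv.subtypePiEquivPi
              (p := fun k (x : F) => x ∈ Aset i0 t0 j r k))
        _ = ∏ r : Fin (n+1), ∏ k : Fin (n+1), Nat.card (Aset (F := F) i0 t0 j r k) :=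
            Finset.prod_congr rfl fun r _ => Nat.card_pi
    have hcards : Nat.card {d : MaxFlagA F n // flagTypeA d X = j ∧ OppA c d}
        = (if (n+1-j) = (i-1) then 1
            else (Fintype.card F - 1) * (Fintype.card F)^((i-1) - (n+1-j) - 1))
          * (Fintype.card F)^((n+1)*n/2 - (i-1)) := by
      rw [hbij, hstep3,
        Finset.prod_congr rfl fun r _ => Finset.prod_congr rfl fun k _ => card_Aset hto hti r k,
        prod_vm (Fintype.card F) hto hti]
    clear_value i0 t0
    have hMN : n*(n-1)/2 + n = (n+1)*n/2 := by
      rcases n with _ | m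
      · simp
      · rw [Nat.add_sub_cancel,
          show (m+1+1)*(m+1) = (m+1)*m + 2*(m+1) from by ring,
          Nat.add_mul_div_left _ _ (by norm_num : 0 < 2)]
    have hq1 : 1 ≤ Fintype.card F := Fintype.card_pos
    have hq0 : ((Fintype.card F : ℚ)) ≠ 0 :=
      Nat.cast_ne_zero.mpr (by clear * - hq1; omega)
    by_cases hd : i + j = n + 2
    · rw [if_pos hd]
      have htieq : (n+1-j) = (i-1) := by clear * - hd hj1 hj2 hi1 hi2; omega
      rw [hcards, if_pos htieq, one_mul, Nat.cast_pow]
      have hexp : ((n * (n - 1) / 2 : ℕ) : ℤ) + (j:ℤ) - 2 + 1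
          = (((n+1)*n/2 - (i-1) : ℕ) : ℤ) := by
        clear * - hd hj1 hj2 hi1 hi2 hMN; omega
      rw [show ((Fintype.card F : ℚ)) ^ (((n+1)*n/2 - (i-1)) : ℕ)
          = (Fintype.card F : ℚ) ^ ((((n+1)*n/2 - (i-1) : ℕ)) : ℤ) from (zpow_natCast _ _).symm,
        ← hexp, zpow_add₀ hq0, zpow_one]
      ring
    · rw [if_neg hd]
      have htine : (n+1-j) ≠ (i-1) := by clear * - hd hij hj1 hj2 hi1 hi2; omega
      rw [hcards, if_neg htine, Nat.cast_mul, Nat.cast_mul, Nat.cast_sub hq1,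
        Nat.cast_pow, Nat.cast_pow, Nat.cast_one]
      have hexp : ((n * (n - 1) / 2 : ℕ) : ℤ) + (j:ℤ) - 2
          = ((((i-1) - (n+1-j) - 1) + ((n+1)*n/2 - (i-1)) : ℕ) : ℤ) := by
        clear * - hd hij hj1 hj2 hi1 hi2 hMN; omega
      rw [hexp, zpow_natCast, pow_add]
      ring
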